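/- Standard teleportation through a shared two-qubit state ρ with singlet fraction F = ⟨φ⁺|ρ|φ⁺⟩ implements a qubit channel whose entanglement fidelity equals F, and hence whose average fidelity equals (2F+1)/3. -/

import Mathlib

open MeasureTheory Matrix
open scoped ComplexOrder

/-- The projector onto the two-qubit maximally entangled state `(|00⟩+|11⟩)/√2`. -/
noncomputable def phiPlus : Matrix (Fin 2 × Fin 2) (Fin 2 × Fin 2) ℂ :=
  Matrix.of fun p q => if p.1 = p.2 ∧ q.1 = q.2 then (1/2 : ℂ) else 0

/-- The Bell basis vector `|β_{ac}⟩ = (1/√2) Σᵢ (−1)^{a·i} |i⟩|i⊕c⟩`. -/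
noncomputable def bellVec (a c : Fin 2) : Fin 2 × Fin 2 → ℂ :=
  fun p => if p.2 = p.1 + c then ((-1 : ℂ) ^ (a.val * p.1.val)) / Real.sqrt 2 else 0

/-- The Pauli correction `Z^a X^c` applied by Bob upon outcome `(a,c)`. -/
def pauliCorr (a c : Fin 2) : Matrix (Fin 2) (Fin 2) ℂ :=
  Matrix.of fun k y => if y = k + c then (-1 : ℂ) ^ (a.val * k.val) else 0

/-- The standard teleportation channel through the shared two-qubit state `ρ`:
Alice Bell-measures the message together with her half of `ρ`, communicates the outcome
`(a,c)`, and Bob applies the Pauli correction `Z^a X^c`. -/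
noncomputable def teleChan (ρ : Matrix (Fin 2 × Fin 2) (Fin 2 × Fin 2) ℂ)
    (σ : Matrix (Fin 2) (Fin 2) ℂ) : Matrix (Fin 2) (Fin 2) ℂ :=
  ∑ a : Fin 2, ∑ c : Fin 2,
    pauliCorr a c *
      (Matrix.of fun y y' => ∑ m : Fin 2, ∑ x : Fin 2, ∑ m' : Fin 2, ∑ x' : Fin 2,
        (starRingEnd ℂ) (bellVec a c (m, x)) * bellVec a c (m', x') * σ m m' *
          ρ (x, y) (x', y')) *
    (pauliCorr a c)ᴴ


-- ===================== auxiliary development =====================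
namespace Stmt12Aux

abbrev UG := Matrix.unitaryGroup (Fin 2) ℂ

noncomputable def vG (U : UG) (i : Fin 2) : ℂ := (U : Matrix (Fin 2) (Fin 2) ℂ) i 0

noncomputable def monG (i j k l : Fin 2) (U : UG) : ℂ :=
  vG U i * (starRingEnd ℂ) (vG U j) * (vG U k * (starRingEnd ℂ) (vG U l))

lemma vG_cont (i : Fin 2) : Continuous fun U : UG => vG U i :=
  (continuous_apply (0 : Fin 2)).comp ((continuous_apply i).comp continuous_subtype_val)

lemma monG_cont (i j k l : Fin 2) : Continuous (monG i j k l) :=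
  ((vG_cont i).mul (Complex.continuous_conj.comp (vG_cont j))).mul
    ((vG_cont k).mul (Complex.continuous_conj.comp (vG_cont l)))

lemma vG_norm (U : UG) (i : Fin 2) : ‖vG U i‖ ≤ 1 :=
  entry_norm_bound_of_unitary U.2 i 0

lemma monG_norm (i j k l : Fin 2) (U : UG) : ‖monG i j k l U‖ ≤ 1 := by
  have hi := vG_norm U i; have hj := vG_norm U j
  have hk := vG_norm U k; have hl := vG_norm U l
  have ni := norm_nonneg (vG U i); have nj := norm_nonneg (vG U j)
  have nk := norm_nonneg (vG U k); have nl := norm_nonneg (vG U l)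
  simp only [monG, norm_mul, RCLike.norm_conj]
  have h1 : ‖vG U i‖ * ‖vG U j‖ ≤ 1 := mul_le_one₀ hi nj hj
  have h2 : ‖vG U k‖ * ‖vG U l‖ ≤ 1 := mul_le_one₀ hk nl hl
  exact mul_le_one₀ h1 (mul_nonneg nk nl) h2

lemma unit_col (U : UG) :
    (starRingEnd ℂ) (vG U 0) * vG U 0 + (starRingEnd ℂ) (vG U 1) * vG U 1 = 1 := by
  have h := U.2
  rw [Matrix.mem_unitaryGroup_iff'] at h
  have h0 := congrFun (congrFun h 0) 0
  simpa [Matrix.mul_apply, Fin.sum_univ_two, Matrix.one_apply, vG, Matrix.star_apply] using h0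

noncomputable def gP : UG :=
  ⟨!![Complex.I, 0; 0, 1], by
    rw [Matrix.mem_unitaryGroup_iff]
    ext i j
    fin_cases i <;> fin_cases j <;>
      simp [Matrix.mul_apply, Fin.sum_univ_two, Matrix.one_apply, Matrix.star_apply,
        Complex.conj_I]⟩

noncomputable def gX : UG :=
  ⟨!![0, 1; 1, 0], by
    rw [Matrix.mem_unitaryGroup_iff]
    ext i j
    fin_cases i <;> fin_cases j <;>
      simp [Matrix.mul_apply, Fin.sum_univ_two, Matrix.one_apply, Matrix.star_apply]⟩

noncomputable def gH : UG :=
  ⟨!![(Real.sqrt 2 : ℂ)⁻¹, (Real.sqrt 2 : ℂ)⁻¹; (Real.sqrt 2 : ℂ)⁻¹, -(Real.sqrt 2 : ℂ)⁻¹], by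
    have h2' : ((Real.sqrt 2 : ℝ) : ℂ) ^ 2 = 2 := by
      norm_cast; rw [sq]; exact Real.mul_self_sqrt (by norm_num)
    have hne : ((Real.sqrt 2 : ℝ) : ℂ) ≠ 0 := by
      intro h; rw [h] at h2'; norm_num at h2'
    rw [Matrix.mem_unitaryGroup_iff]
    ext i j
    fin_cases i <;> fin_cases j <;>
      simp [Matrix.mul_apply, Fin.sum_univ_two, Matrix.one_apply, Matrix.star_apply,
        Complex.conj_ofReal] <;>
      field_simp <;> ring_nf <;> rw [h2'] <;> norm_num⟩

lemma vG_P (U : UG) (i : Fin 2) :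
    vG (gP * U) i = (if i = 0 then Complex.I else 1) * vG U i := by
  fin_cases i <;>
    simp [vG, gP, Submonoid.coe_mul, Matrix.mul_apply, Fin.sum_univ_two]

lemma vG_X (U : UG) (i : Fin 2) : vG (gX * U) i = vG U (i + 1) := by
  fin_cases i <;>
    simp [vG, gX, Submonoid.coe_mul, Matrix.mul_apply, Fin.sum_univ_two]

lemma vG_H (U : UG) (i : Fin 2) :
    vG (gH * U) i = (Real.sqrt 2 : ℂ)⁻¹ * (vG U 0 + (if i = 0 then 1 else -1) * vG U 1) := by
  fin_cases i <;>
    simp [vG, gH, Submonoid.coe_mul, Matrix.mul_apply, Fin.sum_univ_two] <;> ring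

end Stmt12Aux

section Integrals

open Stmt12Aux

variable [MeasurableSpace UG] [BorelSpace UG]
  (μ : Measure UG) [μ.IsHaarMeasure] [IsProbabilityMeasure μ]

namespace Stmt12Aux

lemma monG_integrable (i j k l : Fin 2) : Integrable (monG i j k l) μ :=
  ⟨(monG_cont i j k l).aestronglyMeasurable,
    HasFiniteIntegral.of_bounded (C := 1) (ae_of_all _ (monG_norm i j k l))⟩

lemma mon2_integrable (i : Fin 2) :
    Integrable (fun U : UG => vG U i * (starRingEnd ℂ) (vG U i)) μ := by
  refine ⟨((vG_cont i).mul (Complex.continuous_conj.comp (vG_cont i))).aestronglyMeasurable,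
    HasFiniteIntegral.of_bounded (C := 1) (ae_of_all _ fun U => ?_)⟩
  rw [norm_mul, RCLike.norm_conj]
  exact mul_le_one₀ (vG_norm U i) (norm_nonneg _) (vG_norm U i)

noncomputable def TT (i j k l : Fin 2) : ℂ := ∫ U, monG i j k l U ∂μ

lemma shiftT (g : UG) (i j k l : Fin 2) :
    ∫ U, monG i j k l (g * U) ∂μ = TT μ i j k l :=
  integral_mul_left_eq_self (monG i j k l) g

lemma phase_rel (i j k l : Fin 2) :
    TT μ i j k l = ((if i = 0 then Complex.I else 1) * (if j = 0 then -Complex.I else 1) *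
      ((if k = 0 then Complex.I else 1) * (if l = 0 then -Complex.I else 1))) * TT μ i j k l := by
  have hc : ∀ m : Fin 2,
      (starRingEnd ℂ) (if m = 0 then Complex.I else 1) = if m = 0 then -Complex.I else 1 := by
    intro m; split <;> simp
  have hpt : ∀ U : UG, monG i j k l (gP * U) =
      ((if i = 0 then Complex.I else 1) * (if j = 0 then -Complex.I else 1) *
        ((if k = 0 then Complex.I else 1) * (if l = 0 then -Complex.I else 1))) *
        monG i j k l U := by
    intro U
    simp only [monG, vG_P, _root_.map_mul, hc]
    ring
  calc TT μ i j k l = ∫ U, monG i j k l (gP * U) ∂μ := (shiftT μ gP i j k l).symm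
    _ = ∫ U, ((if i = 0 then Complex.I else 1) * (if j = 0 then -Complex.I else 1) *
          ((if k = 0 then Complex.I else 1) * (if l = 0 then -Complex.I else 1))) *
          monG i j k l U ∂μ := by simp only [hpt]
    _ = _ := integral_const_mul _ _

lemma TT_eq_zero_of_phase {i j k l : Fin 2} (c : ℂ) (hc : c ≠ 1)
    (h : ((if i = 0 then Complex.I else 1) * (if j = 0 then -Complex.I else 1) *
      ((if k = 0 then Complex.I else 1) * (if l = 0 then -Complex.I else 1))) = c) :
    TT μ i j k l = 0 := by
  have hp := phase_rel μ i j k l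
  rw [h] at hp
  have h2 : (1 - c) * TT μ i j k l = 0 := by linear_combination hp
  rcases mul_eq_zero.mp h2 with h3 | h3
  · exact absurd (by linear_combination -h3) hc
  · exact h3

end Stmt12Aux

end Integrals

section Integrals2
open Stmt12Aux
variable [MeasurableSpace UG] [BorelSpace UG]
  (μ : Measure UG) [μ.IsHaarMeasure] [IsProbabilityMeasure μ]
namespace Stmt12Aux

lemma X_rel (i j k l : Fin 2) : TT μ (i+1) (j+1) (k+1) (l+1) = TT μ i j k l := by
  have hpt : ∀ U : UG, monG i j k l (gX * U) = monG (i+1) (j+1) (k+1) (l+1) U := fun U => by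
    simp only [monG, vG_X]
  calc TT μ (i+1) (j+1) (k+1) (l+1) = ∫ U, monG i j k l (gX * U) ∂μ := by
        unfold TT; rw [integral_congr_ae (ae_of_all _ hpt)]
    _ = TT μ i j k l := shiftT μ gX i j k l

lemma d_eq : (∫ U, vG U 1 * (starRingEnd ℂ) (vG U 1) ∂μ)
    = ∫ U, vG U 0 * (starRingEnd ℂ) (vG U 0) ∂μ := by
  have hpt : ∀ U : UG, vG (gX * U) 0 * (starRingEnd ℂ) (vG (gX * U) 0)
      = vG U 1 * (starRingEnd ℂ) (vG U 1) := fun U => by simp [vG_X]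
  rw [← integral_mul_left_eq_self (fun U : UG => vG U 0 * (starRingEnd ℂ) (vG U 0)) gX]
  exact integral_congr_ae (ae_of_all _ fun U => (hpt U).symm)

lemma d_val : (∫ U, vG U 0 * (starRingEnd ℂ) (vG U 0) ∂μ) = 1/2 := by
  have hsum : (∫ U, vG U 0 * (starRingEnd ℂ) (vG U 0) ∂μ)
      + ∫ U, vG U 1 * (starRingEnd ℂ) (vG U 1) ∂μ = 1 := by
    rw [← integral_add (mon2_integrable μ 0) (mon2_integrable μ 1)]
    have hpt : ∀ U : UG, vG U 0 * (starRingEnd ℂ) (vG U 0)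
        + vG U 1 * (starRingEnd ℂ) (vG U 1) = 1 := fun U => by
      linear_combination unit_col U
    rw [integral_congr_ae (ae_of_all _ hpt)]
    simp
  have he := d_eq μ
  linear_combination (hsum - he) / 2

lemma ab_sum : TT μ 0 0 0 0 + TT μ 0 0 1 1 = 1/2 := by
  have hpt : ∀ U : UG, monG 0 0 0 0 U + monG 0 0 1 1 U
      = vG U 0 * (starRingEnd ℂ) (vG U 0) := fun U => by
    simp only [monG]
    linear_combination (vG U 0 * (starRingEnd ℂ) (vG U 0)) * unit_col U
  have := d_val μ
  rw [← this]
  unfold TT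
  rw [← integral_add (monG_integrable μ 0 0 0 0) (monG_integrable μ 0 0 1 1)]
  exact integral_congr_ae (ae_of_all _ hpt)

lemma b_eq1 : TT μ 0 1 1 0 = TT μ 0 0 1 1 := by
  unfold TT; congr 1; funext U; simp only [monG]; ring

lemma b_eq2 : TT μ 1 0 0 1 = TT μ 0 0 1 1 := by
  unfold TT; congr 1; funext U; simp only [monG]; ring

lemma b_eq3 : TT μ 1 1 0 0 = TT μ 0 0 1 1 := by
  unfold TT; congr 1; funext U; simp only [monG]; ring

lemma H_rel : TT μ 0 0 0 0 = (1/4) * ∑ p : Fin 2 × Fin 2 × Fin 2 × Fin 2,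
    TT μ p.1 p.2.1 p.2.2.1 p.2.2.2 := by
  have h2' : ((Real.sqrt 2 : ℝ) : ℂ) ^ 2 = 2 := by
    norm_cast; rw [sq]; exact Real.mul_self_sqrt (by norm_num)
  have hne : ((Real.sqrt 2 : ℝ) : ℂ) ≠ 0 := by
    intro h; rw [h] at h2'; norm_num at h2'
  have hpt : ∀ U : UG, monG 0 0 0 0 (gH * U)
      = (1/4) * ∑ p : Fin 2 × Fin 2 × Fin 2 × Fin 2, monG p.1 p.2.1 p.2.2.1 p.2.2.2 U := by
    intro U
    simp only [monG, vG_H, _root_.map_mul, map_add, map_inv₀, Complex.conj_ofReal,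
      Fintype.sum_prod_type, Fin.sum_univ_two]
    norm_num
    field_simp
    ring_nf
    rw [show ((Real.sqrt 2 : ℝ) : ℂ) ^ 4 = 4 by rw [show (4:ℕ) = 2*2 from rfl, pow_mul, h2']; norm_num]
    ring
  calc TT μ 0 0 0 0 = ∫ U, monG 0 0 0 0 (gH * U) ∂μ := (shiftT μ gH 0 0 0 0).symm
    _ = ∫ U, (1/4) * ∑ p : Fin 2 × Fin 2 × Fin 2 × Fin 2,
          monG p.1 p.2.1 p.2.2.1 p.2.2.2 U ∂μ := integral_congr_ae (ae_of_all _ hpt)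
    _ = (1/4) * ∫ U, ∑ p : Fin 2 × Fin 2 × Fin 2 × Fin 2,
          monG p.1 p.2.1 p.2.2.1 p.2.2.2 U ∂μ := integral_const_mul _ _
    _ = _ := by
        rw [integral_finset_sum _ (fun p _ => monG_integrable μ p.1 p.2.1 p.2.2.1 p.2.2.2)]
        rfl

end Stmt12Aux
end Integrals2

section Integrals3
open Stmt12Aux
variable [MeasurableSpace UG] [BorelSpace UG]
  (μ : Measure UG) [μ.IsHaarMeasure] [IsProbabilityMeasure μ]
namespace Stmt12Aux

lemma z0001 : TT μ 0 0 0 1 = 0 := TT_eq_zero_of_phase μ Complex.I (by simp [Complex.ext_iff]) (by norm_num)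
lemma z0010 : TT μ 0 0 1 0 = 0 := TT_eq_zero_of_phase μ (-Complex.I) (by simp [Complex.ext_iff]) (by norm_num)
lemma z0100 : TT μ 0 1 0 0 = 0 := TT_eq_zero_of_phase μ Complex.I (by simp [Complex.ext_iff]) (by norm_num)
lemma z1000 : TT μ 1 0 0 0 = 0 := TT_eq_zero_of_phase μ (-Complex.I) (by simp [Complex.ext_iff]) (by norm_num)
lemma z0111 : TT μ 0 1 1 1 = 0 := TT_eq_zero_of_phase μ Complex.I (by simp [Complex.ext_iff]) (by norm_num)
lemma z1011 : TT μ 1 0 1 1 = 0 := TT_eq_zero_of_phase μ (-Complex.I) (by simp [Complex.ext_iff]) (by norm_num)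
lemma z1101 : TT μ 1 1 0 1 = 0 := TT_eq_zero_of_phase μ Complex.I (by simp [Complex.ext_iff]) (by norm_num)
lemma z1110 : TT μ 1 1 1 0 = 0 := TT_eq_zero_of_phase μ (-Complex.I) (by simp [Complex.ext_iff]) (by norm_num)
lemma z0101 : TT μ 0 1 0 1 = 0 := TT_eq_zero_of_phase μ (-1) (by norm_num) (by norm_num)
lemma z1010 : TT μ 1 0 1 0 = 0 := TT_eq_zero_of_phase μ (-1) (by norm_num) (by norm_num)

lemma hX1111 : TT μ 1 1 1 1 = TT μ 0 0 0 0 := by simpa using X_rel μ 0 0 0 0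

lemma a_val : TT μ 0 0 0 0 = 1/3 := by
  have h := H_rel μ
  simp only [Fintype.sum_prod_type, Fin.sum_univ_two, z0001 μ, z0010 μ, z0100 μ, z1000 μ,
    z0111 μ, z1011 μ, z1101 μ, z1110 μ, z0101 μ, z1010 μ, b_eq1 μ, b_eq2 μ, b_eq3 μ,
    hX1111 μ, add_zero, zero_add] at h
  have hab := ab_sum μ
  linear_combination (2/3) * h + (2/3) * hab

lemma b_val : TT μ 0 0 1 1 = 1/6 := by
  have hab := ab_sum μ
  have ha := a_val μ
  linear_combination hab - ha

end Stmt12Aux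
end Integrals3

section FinalAux

set_option maxHeartbeats 2000000 in
lemma stmt12_part1 (ρ : Matrix (Fin 2 × Fin 2) (Fin 2 × Fin 2) ℂ) :
    ((1/4 : ℂ) * ∑ i : Fin 2, ∑ j : Fin 2,
        teleChan ρ (Matrix.single i j 1) i j) = (ρ * phiPlus).trace := by
  have h2 : ((Real.sqrt 2 : ℝ) : ℂ) * ((Real.sqrt 2 : ℝ) : ℂ) = 2 := by
    norm_cast; exact Real.mul_self_sqrt (by norm_num)
  have h2' : ((Real.sqrt 2 : ℝ) : ℂ)^2 = 2 := by rw [sq]; exact h2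
  have hne : ((Real.sqrt 2 : ℝ) : ℂ) ≠ 0 := by
    intro h; rw [h] at h2; simpa using h2.symm
  simp [teleChan, trace, Matrix.mul_apply, Matrix.sum_apply, Fin.sum_univ_two,
    conjTranspose_apply, bellVec, pauliCorr, phiPlus, Matrix.single,
    Fintype.sum_prod_type, diag_apply, map_div₀, Complex.conj_ofReal]
  field_simp
  ring_nf
  rw [h2']
  ring

set_option maxHeartbeats 2000000 in
lemma stmt12_tp (ρ : Matrix (Fin 2 × Fin 2) (Fin 2 × Fin 2) ℂ) :
    (∑ i : Fin 2, ∑ k : Fin 2, teleChan ρ (Matrix.single k k 1) i i)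
      = 2 * ρ.trace := by
  have h2 : ((Real.sqrt 2 : ℝ) : ℂ) * ((Real.sqrt 2 : ℝ) : ℂ) = 2 := by
    norm_cast; exact Real.mul_self_sqrt (by norm_num)
  have h2' : ((Real.sqrt 2 : ℝ) : ℂ)^2 = 2 := by rw [sq]; exact h2
  have hne : ((Real.sqrt 2 : ℝ) : ℂ) ≠ 0 := by
    intro h; rw [h] at h2; simpa using h2.symm
  simp [teleChan, trace, Matrix.mul_apply, Matrix.sum_apply, Fin.sum_univ_two,
    conjTranspose_apply, bellVec, pauliCorr, Matrix.single,
    Fintype.sum_prod_type, diag_apply, map_div₀, Complex.conj_ofReal]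
  field_simp
  ring_nf
  rw [h2']
  ring

set_option maxHeartbeats 2000000 in
lemma stmt12_lin (ρ : Matrix (Fin 2 × Fin 2) (Fin 2 × Fin 2) ℂ)
    (σ : Matrix (Fin 2) (Fin 2) ℂ) (j i : Fin 2) :
    teleChan ρ σ j i = ∑ k : Fin 2, ∑ l : Fin 2,
      σ k l * teleChan ρ (Matrix.single k l 1) j i := by
  simp [teleChan, Matrix.mul_apply, Matrix.sum_apply, Fin.sum_univ_two,
    conjTranspose_apply, Matrix.single, Fintype.sum_prod_type]
  ring

end FinalAux

open Stmt12Aux in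
set_option maxHeartbeats 2000000 in
/-- **Teleportation fidelity equals the singlet fraction.**  Standard teleportation through
a shared two-qubit state `ρ` with singlet fraction `F = ⟨φ⁺|ρ|φ⁺⟩` implements a qubit
channel whose entanglement fidelity `(1/4)Σᵢⱼ ⟨i|Λ(|i⟩⟨j|)|j⟩` equals `F`, and hence whose
Haar-average fidelity equals `(2F+1)/3`. -/
theorem stmt_12 (ρ : Matrix (Fin 2 × Fin 2) (Fin 2 × Fin 2) ℂ)
    (hρ : ρ.PosSemidef) (htr : ρ.trace = 1)
    [MeasurableSpace (Matrix.unitaryGroup (Fin 2) ℂ)]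
    [BorelSpace (Matrix.unitaryGroup (Fin 2) ℂ)]
    (μ : Measure (Matrix.unitaryGroup (Fin 2) ℂ)) [μ.IsHaarMeasure]
    [IsProbabilityMeasure μ] :
    ((1/4 : ℂ) * ∑ i : Fin 2, ∑ j : Fin 2,
        teleChan ρ (Matrix.single i j 1) i j) = (ρ * phiPlus).trace ∧
    (∫ U : Matrix.unitaryGroup (Fin 2) ℂ,
        (Matrix.trace
          ((Matrix.of fun i j => (U : Matrix (Fin 2) (Fin 2) ℂ) i 0 *
              (starRingEnd ℂ) ((U : Matrix (Fin 2) (Fin 2) ℂ) j 0)) *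
            teleChan ρ (Matrix.of fun i j => (U : Matrix (Fin 2) (Fin 2) ℂ) i 0 *
              (starRingEnd ℂ) ((U : Matrix (Fin 2) (Fin 2) ℂ) j 0)))).re ∂μ)
      = (2 * ((ρ * phiPlus).trace).re + 1) / 3 := by
  have hpart1 := stmt12_part1 ρ
  refine ⟨hpart1, ?_⟩
  set F : ℂ := (ρ * phiPlus).trace with hF
  -- the complex-valued integrand, written as a sum of fourth-order monomials
  set g : UG → ℂ := fun U => ∑ p : Fin 2 × Fin 2 × Fin 2 × Fin 2,
      monG p.1 p.2.1 p.2.2.1 p.2.2.2 U *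
        teleChan ρ (Matrix.single p.2.2.1 p.2.2.2 1) p.2.1 p.1 with hg
  have hint : ∀ p : Fin 2 × Fin 2 × Fin 2 × Fin 2,
      Integrable (fun U : UG => monG p.1 p.2.1 p.2.2.1 p.2.2.2 U *
        teleChan ρ (Matrix.single p.2.2.1 p.2.2.2 1) p.2.1 p.1) μ :=
    fun p => (monG_integrable μ p.1 p.2.1 p.2.2.1 p.2.2.2).mul_const _
  have hgint : Integrable g μ := by
    rw [hg]; exact integrable_finset_sum _ fun p _ => hint p
  have hpt : ∀ U : UG,
      Matrix.trace
          ((Matrix.of fun i j => (U : Matrix (Fin 2) (Fin 2) ℂ) i 0 *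
              (starRingEnd ℂ) ((U : Matrix (Fin 2) (Fin 2) ℂ) j 0)) *
            teleChan ρ (Matrix.of fun i j => (U : Matrix (Fin 2) (Fin 2) ℂ) i 0 *
              (starRingEnd ℂ) ((U : Matrix (Fin 2) (Fin 2) ℂ) j 0))) = g U := by
    intro U
    have hT := stmt12_lin ρ (Matrix.of fun i j => (U : Matrix (Fin 2) (Fin 2) ℂ) i 0 *
      (starRingEnd ℂ) ((U : Matrix (Fin 2) (Fin 2) ℂ) j 0))
    simp only [hg, Matrix.trace, Matrix.diag, Matrix.mul_apply, Fin.sum_univ_two, hT,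
      Matrix.of_apply, monG, vG, Fintype.sum_prod_type]
    ring
  have hIg : ∫ U, g U ∂μ = ((1/3 : ℝ) : ℂ) + ((2/3 : ℝ) : ℂ) * F := by
    rw [hg, integral_finset_sum _ fun p _ => hint p]
    simp only [MeasureTheory.integral_mul_const]
    have hA := stmt12_tp ρ
    rw [htr, mul_one] at hA
    simp only [Fin.sum_univ_two] at hA hpart1
    simp only [Fintype.sum_prod_type, Fin.sum_univ_two]
    have e0 : ∀ U : UG, True := fun _ => trivial
    simp only [show ∀ i j k l : Fin 2, (∫ U, monG i j k l U ∂μ) = TT μ i j k l from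
      fun _ _ _ _ => rfl]
    rw [z0001 μ, z0010 μ, z0100 μ, z1000 μ, z0111 μ, z1011 μ, z1101 μ, z1110 μ,
      z0101 μ, z1010 μ, b_eq1 μ, b_eq2 μ, b_eq3 μ, hX1111 μ, a_val μ, b_val μ]
    push_cast
    linear_combination (1/6 : ℂ) * hA + (2/3 : ℂ) * hpart1
  calc (∫ U : Matrix.unitaryGroup (Fin 2) ℂ,
        (Matrix.trace
          ((Matrix.of fun i j => (U : Matrix (Fin 2) (Fin 2) ℂ) i 0 *
              (starRingEnd ℂ) ((U : Matrix (Fin 2) (Fin 2) ℂ) j 0)) *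
            teleChan ρ (Matrix.of fun i j => (U : Matrix (Fin 2) (Fin 2) ℂ) i 0 *
              (starRingEnd ℂ) ((U : Matrix (Fin 2) (Fin 2) ℂ) j 0)))).re ∂μ)
      = ∫ U, (g U).re ∂μ := integral_congr_ae (ae_of_all _ fun U => congrArg Complex.re (hpt U))
    _ = (∫ U, g U ∂μ).re := by
        simpa using integral_re (f := g) (μ := μ) hgint
    _ = (2 * F.re + 1) / 3 := by
        rw [hIg]
        simp [Complex.add_re, Complex.ofReal_re, Complex.re_ofReal_mul]
        ring
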